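/- Limiting ratio of successive sampling probabilities when selection is subcritical relative to sample size (equations (10a)–(10b) of the paper): fix θ₁, θ₂ > 0, a natural number n₁, and β̃ < 1. For each natural number n₂, set n = n₁ + n₂, β = β̃·n₂, and define q(m₁,n₂;β) := C(m₁+n₂,m₁) · I(m₁,n₂,β) / I(0,0,β), where C(·,·) is the binomial coefficient and I(m₁,m₂,β) := ∫₀¹ x^{θ₁+m₁-1}(1-x)^{θ₂+m₂-1} e^{βx} dx. Then lim_{n₂ → ∞} q(n₁+1,n₂;β̃n₂) / q(n₁,n₂;β̃n₂) = (θ₁+n₁) / ((1-β̃)(n₁+1)). -/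

import Mathlib

open Real Filter Topology MeasureTheory Set intervalIntegral

lemma betaExp_intervalIntegrable {a b c : ℝ} (ha : 0 < a) (hb : 0 < b) :
    IntervalIntegrable (fun x => x ^ (a-1) * (1-x) ^ (b-1) * Real.exp (c*x))
      MeasureTheory.volume 0 1 := by
  have h1 : IntervalIntegrable (fun x => x ^ (a-1) * (1-x) ^ (b-1) * Real.exp (c*x))
      MeasureTheory.volume 0 (1/2) := by
    have hbase : IntervalIntegrable (fun x : ℝ => x ^ (a-1)) MeasureTheory.volume 0 (1/2) :=
      intervalIntegrable_rpow' (by linarith)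
    have hg : ContinuousOn (fun x : ℝ => (1-x) ^ (b-1) * Real.exp (c*x)) (Set.uIcc 0 (1/2)) := by
      apply ContinuousOn.mul
      · apply ContinuousOn.rpow_const (by fun_prop)
        intro x hx
        rw [Set.uIcc_of_le (by norm_num)] at hx
        left
        have h2 := hx.2
        intro h; rw [sub_eq_zero] at h; rw [← h] at h2; norm_num at h2
      · fun_prop
    simpa [mul_assoc] using hbase.mul_continuousOn hg
  have h2 : IntervalIntegrable (fun x => x ^ (a-1) * (1-x) ^ (b-1) * Real.exp (c*x))
      MeasureTheory.volume (1/2) 1 := by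
    have hbase : IntervalIntegrable (fun x : ℝ => (1-x) ^ (b-1)) MeasureTheory.volume (1/2) 1 := by
      have h' := (intervalIntegrable_rpow' (by linarith) :
        IntervalIntegrable (fun x : ℝ => x ^ (b-1)) MeasureTheory.volume 0 (1/2)).comp_sub_left 1
      norm_num at h'
      exact h'.symm
    have hg : ContinuousOn (fun x : ℝ => x ^ (a-1) * Real.exp (c*x)) (Set.uIcc (1/2) 1) := by
      apply ContinuousOn.mul
      · apply ContinuousOn.rpow_const (by fun_prop)
        intro x hx
        rw [Set.uIcc_of_le (by norm_num)] at hx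
        left; intro h; rw [h] at hx; norm_num at hx
      · fun_prop
    have := hbase.continuousOn_mul hg
    apply this.congr
    intro x _
    beta_reduce
    ring
  exact h1.trans h2
lemma betaExp_pos {a b c : ℝ} (ha : 0 < a) (hb : 0 < b) :
    0 < ∫ x in (0:ℝ)..1, x ^ (a-1) * (1-x) ^ (b-1) * Real.exp (c*x) := by
  apply intervalIntegral.intervalIntegral_pos_of_pos_on (betaExp_intervalIntegrable ha hb)
  · intro x hx
    have h1 : 0 < x := hx.1
    have h2 : 0 < 1 - x := by linarith [hx.2]
    positivity
  · norm_num

lemma betaExp_scale {a b c : ℝ} (n : ℕ) (hn : 0 < n) :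
    (∫ x in (0:ℝ)..1, x ^ (a-1) * (1-x) ^ (b-1) * Real.exp (c*(n:ℝ)*x))
      = (n:ℝ) ^ (-a) * ∫ y in (0:ℝ)..(n:ℝ),
          y ^ (a-1) * (1-y/(n:ℝ)) ^ (b-1) * Real.exp (c*y) := by
  have hnR : (0:ℝ) < n := by exact_mod_cast hn
  have hne : (n:ℝ) ≠ 0 := ne_of_gt hnR
  have hcomp := intervalIntegral.integral_comp_div
    (a := 0) (b := (n:ℝ)) (c := (n:ℝ))
    (f := fun x => x ^ (a-1) * (1-x) ^ (b-1) * Real.exp (c*(n:ℝ)*x)) hne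
  rw [zero_div, div_self hne] at hcomp
  have hcongr : ∫ y in (0:ℝ)..(n:ℝ), y ^ (a-1) * (1-y/(n:ℝ)) ^ (b-1) * Real.exp (c*y)
      = ∫ y in (0:ℝ)..(n:ℝ), (n:ℝ) ^ (a-1) *
          ((y/(n:ℝ)) ^ (a-1) * (1-y/(n:ℝ)) ^ (b-1) * Real.exp (c*(n:ℝ)*(y/(n:ℝ)))) := by
    apply intervalIntegral.integral_congr
    intro y hy
    rw [Set.uIcc_of_le hnR.le] at hy
    have hy0 : 0 ≤ y := hy.1
    dsimp only
    rw [Real.div_rpow hy0 hnR.le, show c * (n:ℝ) * (y/(n:ℝ)) = c * y by field_simp]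
    have hpow : (n:ℝ)^(a-1) ≠ 0 := (Real.rpow_pos_of_pos hnR _).ne'
    field_simp
  rw [hcongr, intervalIntegral.integral_const_mul, hcomp, smul_eq_mul,
    ← mul_assoc, ← mul_assoc]
  have h1 : (n:ℝ)^(-a) * (n:ℝ)^(a-1) = (n:ℝ)^(-1:ℝ) := by
    rw [← Real.rpow_add hnR]; congr 1; ring
  rw [h1, Real.rpow_neg_one, inv_mul_cancel₀ hne, one_mul]

lemma betaExp_G_tendsto {a θ₂ βt : ℝ} (ha : 0 < a) (hθ₂ : 0 < θ₂) (hβ : βt < 1) :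
    Tendsto (fun n : ℕ => ∫ y in (0:ℝ)..(n:ℝ),
        y ^ (a-1) * (1 - y/(n:ℝ)) ^ (θ₂ + (n:ℝ) - 1) * Real.exp (βt*y)) atTop
      (𝓝 ((1/(1-βt)) ^ a * Real.Gamma a)) := by
  have hδ : (0:ℝ) < (1-βt)/2 := by linarith
  set δ := (1-βt)/2 with hδdef
  set F : ℕ → ℝ → ℝ := fun n y =>
    (Set.Ioc (0:ℝ) (n:ℝ)).indicator
      (fun y => y ^ (a-1) * (1 - y/(n:ℝ)) ^ (θ₂ + (n:ℝ) - 1) * Real.exp (βt*y)) y with hF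
  have hrw : ∀ n : ℕ, (∫ y in (0:ℝ)..(n:ℝ),
      y ^ (a-1) * (1 - y/(n:ℝ)) ^ (θ₂ + (n:ℝ) - 1) * Real.exp (βt*y))
      = ∫ y in Set.Ioi (0:ℝ), F n y := by
    intro n
    rw [intervalIntegral.integral_of_le (by positivity), hF]
    rw [MeasureTheory.setIntegral_indicator measurableSet_Ioc,
      Set.inter_eq_self_of_subset_right Set.Ioc_subset_Ioi_self]
  have hmeas : ∀ᶠ n : ℕ in atTop, AEStronglyMeasurable (F n) (volume.restrict (Set.Ioi 0)) := by
    refine Eventually.of_forall fun n => ?_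
    refine (Measurable.indicator ?_ measurableSet_Ioc).aestronglyMeasurable
    fun_prop
  have hbound : ∀ᶠ n : ℕ in atTop, ∀ᵐ y ∂(volume.restrict (Set.Ioi 0)),
      ‖F n y‖ ≤ y ^ (a-1) * Real.exp (-δ*y) := by
    have htend : Tendsto (fun n:ℕ => 1 - 1/(n:ℝ)) atTop (𝓝 1) := by
      simpa using (tendsto_one_div_atTop_nhds_zero_nat (𝕜 := ℝ)).const_sub 1
    have hev1 : ∀ᶠ n:ℕ in atTop, (1+βt)/2 ≤ 1 - 1/(n:ℝ) :=
      htend.eventually_const_le (by linarith)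
    filter_upwards [hev1, eventually_ge_atTop 1] with n hn1 hn2
    rw [MeasureTheory.ae_restrict_iff' measurableSet_Ioi]
    refine Eventually.of_forall fun y hy => ?_
    have hy0 : (0:ℝ) < y := hy
    have hnR : (1:ℝ) ≤ (n:ℝ) := by exact_mod_cast hn2
    have hnpos : (0:ℝ) < (n:ℝ) := by linarith
    by_cases hyn : y ≤ (n:ℝ)
    · have hmem : y ∈ Set.Ioc (0:ℝ) (n:ℝ) := ⟨hy0, hyn⟩
      rw [hF]
      simp only [Set.indicator_of_mem hmem]
      have h1 : (0:ℝ) ≤ 1 - y/(n:ℝ) := by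
        rw [sub_nonneg, div_le_one hnpos]; exact hyn
      have hpexp : (0:ℝ) ≤ θ₂ + (n:ℝ) - 1 := by linarith
      have hstep : (1 - y/(n:ℝ)) ^ (θ₂+(n:ℝ)-1)
          ≤ Real.exp (-(y/(n:ℝ))) ^ (θ₂+(n:ℝ)-1) :=
        Real.rpow_le_rpow h1 (by linarith [Real.add_one_le_exp (-(y/(n:ℝ)))]) hpexp
      rw [← Real.exp_mul] at hstep
      have hexp' : βt*y + -(y/(n:ℝ)) * (θ₂+(n:ℝ)-1) ≤ -δ*y := by
        have hid : y/(n:ℝ) * ((n:ℝ)-1) = y * (1 - 1/(n:ℝ)) := by field_simp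
        have h3 : (n:ℝ)-1 ≤ θ₂+(n:ℝ)-1 := by linarith
        have h4 : y/(n:ℝ) * ((n:ℝ)-1) ≤ y/(n:ℝ) * (θ₂+(n:ℝ)-1) :=
          mul_le_mul_of_nonneg_left h3 (div_nonneg hy0.le hnpos.le)
        have h5 : y * ((1+βt)/2) ≤ y * (1 - 1/(n:ℝ)) :=
          mul_le_mul_of_nonneg_left hn1 hy0.le
        nlinarith
      have hnorm : ‖y ^ (a-1) * (1 - y/(n:ℝ)) ^ (θ₂+(n:ℝ)-1) * Real.exp (βt*y)‖
          = y ^ (a-1) * (1 - y/(n:ℝ)) ^ (θ₂+(n:ℝ)-1) * Real.exp (βt*y) := by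
        rw [Real.norm_eq_abs, abs_of_nonneg]
        exact mul_nonneg (mul_nonneg (Real.rpow_nonneg hy0.le _)
          (Real.rpow_nonneg h1 _)) (Real.exp_pos _).le
      rw [hnorm]
      calc y ^ (a-1) * (1 - y/(n:ℝ)) ^ (θ₂+(n:ℝ)-1) * Real.exp (βt*y)
          ≤ y ^ (a-1) * Real.exp (-(y/(n:ℝ)) * (θ₂+(n:ℝ)-1)) * Real.exp (βt*y) :=
            mul_le_mul_of_nonneg_right
              (mul_le_mul_of_nonneg_left hstep (Real.rpow_nonneg hy0.le _))
              (Real.exp_pos _).le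
        _ = y ^ (a-1) * Real.exp (βt*y + -(y/(n:ℝ)) * (θ₂+(n:ℝ)-1)) := by
            rw [mul_assoc, ← Real.exp_add]; ring_nf
        _ ≤ y ^ (a-1) * Real.exp (-δ*y) :=
            mul_le_mul_of_nonneg_left (Real.exp_le_exp.mpr hexp')
              (Real.rpow_nonneg hy0.le _)
    · rw [hF]
      simp only [Set.indicator_of_notMem (fun hmem => hyn (Set.mem_Ioc.mp hmem).2)]
      simp only [norm_zero]
      positivity
  have hint : MeasureTheory.Integrable (fun y : ℝ => y ^ (a-1) * Real.exp (-δ*y))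
      (volume.restrict (Set.Ioi 0)) := by
    have := integrableOn_rpow_mul_exp_neg_mul_rpow (p := 1) (s := a-1) (b := δ)
      (by linarith) one_pos hδ
    simpa [Real.rpow_one, IntegrableOn] using this
  have hlim : ∀ᵐ y ∂(volume.restrict (Set.Ioi 0)),
      Tendsto (fun n : ℕ => F n y) atTop (𝓝 (y ^ (a-1) * Real.exp (-((1-βt)*y)))) := by
    rw [MeasureTheory.ae_restrict_iff' measurableSet_Ioi]
    refine Eventually.of_forall fun y hy => ?_
    have hy0 : (0:ℝ) < y := hy
    have hev : ∀ᶠ n:ℕ in atTop, y + 1 ≤ (n:ℝ) :=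
      tendsto_natCast_atTop_atTop.eventually_ge_atTop (y+1)
    have h1 : Tendsto (fun n:ℕ => (1 - y/(n:ℝ)) ^ ((n:ℝ))) atTop (𝓝 (Real.exp (-y))) := by
      have := (tendsto_one_add_div_rpow_exp (-y)).comp tendsto_natCast_atTop_atTop
      simpa [Function.comp_def, neg_div, ← sub_eq_add_neg] using this
    have h2 : Tendsto (fun n:ℕ => (1 - y/(n:ℝ)) ^ (θ₂-1)) atTop (𝓝 1) := by
      have hb : Tendsto (fun n:ℕ => 1 - y/(n:ℝ)) atTop (𝓝 1) := by
        simpa using (tendsto_const_div_atTop_nhds_zero_nat y).const_sub 1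
      have hc : ContinuousAt (fun x:ℝ => x ^ (θ₂-1)) 1 :=
        Real.continuousAt_rpow_const 1 (θ₂-1) (Or.inl one_ne_zero)
      simpa [Function.comp_def] using hc.tendsto.comp hb
    have hg : Tendsto (fun n:ℕ => y ^ (a-1) * ((1 - y/(n:ℝ)) ^ ((n:ℝ)) *
        (1 - y/(n:ℝ)) ^ (θ₂-1)) * Real.exp (βt*y)) atTop
        (𝓝 (y ^ (a-1) * (Real.exp (-y) * 1) * Real.exp (βt*y))) :=
      ((h1.mul h2).const_mul _).mul_const _
    have hval : y ^ (a-1) * (Real.exp (-y) * 1) * Real.exp (βt*y)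
        = y ^ (a-1) * Real.exp (-((1-βt)*y)) := by
      rw [mul_one, mul_assoc, ← Real.exp_add]; ring_nf
    rw [← hval]
    refine hg.congr' ?_
    filter_upwards [hev] with n hn
    have hyn : y ≤ (n:ℝ) := by linarith
    have hbase : (0:ℝ) < 1 - y/(n:ℝ) := by
      rw [sub_pos, div_lt_one (by linarith)]; linarith
    rw [hF]
    simp only [Set.indicator_of_mem (Set.mem_Ioc.mpr ⟨hy0, hyn⟩)]
    rw [← Real.rpow_add hbase]
    congr 2
    ring
  have hmain := MeasureTheory.tendsto_integral_filter_of_dominated_convergence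
    (μ := volume.restrict (Set.Ioi 0)) (F := F)
    (f := fun y => y ^ (a-1) * Real.exp (-((1-βt)*y)))
    (bound := fun y => y ^ (a-1) * Real.exp (-δ*y)) hmeas hbound hint hlim
  have hvalue : (∫ y in Set.Ioi (0:ℝ), y ^ (a-1) * Real.exp (-((1-βt)*y)))
      = (1/(1-βt)) ^ a * Real.Gamma a :=
    integral_rpow_mul_exp_neg_mul_Ioi ha (by linarith)
  rw [← hvalue]
  exact hmain.congr fun n => (hrw n).symm

set_option maxHeartbeats 1000000 in
/-- Limiting ratio of successive sampling probabilities when selection is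
subcritical relative to sample size (eqs. (10a)–(10b)): with `β = β̃·n₂`, `β̃ < 1`,
and `q(m₁,n₂;β) = C(m₁+n₂,m₁)·I(m₁,n₂,β)/I(0,0,β)` where
`I(m₁,m₂,β) = ∫₀¹ x^{θ₁+m₁-1}(1-x)^{θ₂+m₂-1}e^{βx} dx`,
one has `lim_{n₂→∞} q(n₁+1,n₂;β̃n₂)/q(n₁,n₂;β̃n₂) = (θ₁+n₁)/((1-β̃)(n₁+1))`. -/
theorem sampling_prob_ratio_subcritical (θ₁ θ₂ βt : ℝ)
    (hθ₁ : 0 < θ₁) (hθ₂ : 0 < θ₂) (hβ : βt < 1) (n₁ : ℕ) :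
    Filter.Tendsto (fun n₂ : ℕ =>
        ((Nat.choose ((n₁ + 1) + n₂) (n₁ + 1) : ℝ) *
          (∫ x in (0:ℝ)..1,
            x ^ (θ₁ + (n₁ + 1 : ℕ) - 1) * (1 - x) ^ (θ₂ + n₂ - 1) * Real.exp (βt * n₂ * x)) /
          (∫ x in (0:ℝ)..1, x ^ (θ₁ - 1) * (1 - x) ^ (θ₂ - 1) * Real.exp (βt * n₂ * x))) /
        ((Nat.choose (n₁ + n₂) n₁ : ℝ) *
          (∫ x in (0:ℝ)..1,
            x ^ (θ₁ + n₁ - 1) * (1 - x) ^ (θ₂ + n₂ - 1) * Real.exp (βt * n₂ * x)) /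
          (∫ x in (0:ℝ)..1, x ^ (θ₁ - 1) * (1 - x) ^ (θ₂ - 1) * Real.exp (βt * n₂ * x))))
      Filter.atTop
      (𝓝 ((θ₁ + n₁) / ((1 - βt) * (n₁ + 1)))) := by
  set a : ℝ := θ₁ + (n₁ : ℝ) with ha_def
  have ha : 0 < a := by positivity
  have hcast : θ₁ + ((n₁ + 1 : ℕ) : ℝ) = a + 1 := by rw [ha_def]; push_cast; ring
  have hβ' : (0:ℝ) < 1 - βt := by linarith
  have h1β : (0:ℝ) < 1/(1-βt) := by positivity
  have hGa : Tendsto (fun n : ℕ => ∫ y in (0:ℝ)..(n:ℝ),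
      y ^ (a-1) * (1 - y/(n:ℝ)) ^ (θ₂ + (n:ℝ) - 1) * Real.exp (βt*y)) atTop
      (𝓝 ((1/(1-βt)) ^ a * Real.Gamma a)) := betaExp_G_tendsto ha hθ₂ hβ
  have hGa1 : Tendsto (fun n : ℕ => ∫ y in (0:ℝ)..(n:ℝ),
      y ^ (a+1-1) * (1 - y/(n:ℝ)) ^ (θ₂ + (n:ℝ) - 1) * Real.exp (βt*y)) atTop
      (𝓝 ((1/(1-βt)) ^ (a+1) * Real.Gamma (a+1))) := betaExp_G_tendsto (by linarith) hθ₂ hβ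
  have hLpos : 0 < (1/(1-βt)) ^ a * Real.Gamma a :=
    mul_pos (Real.rpow_pos_of_pos h1β _) (Real.Gamma_pos_of_pos ha)
  have hA : Tendsto (fun n:ℕ => ((n₁:ℝ)+1+(n:ℝ))/(n:ℝ)) atTop (𝓝 1) := by
    have h0 : Tendsto (fun n:ℕ => 1 + ((n₁:ℝ)+1)/(n:ℝ)) atTop (𝓝 (1+0)) :=
      tendsto_const_nhds.add (tendsto_const_div_atTop_nhds_zero_nat _)
    rw [add_zero] at h0
    refine h0.congr' ?_
    filter_upwards [eventually_ge_atTop 1] with n hn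
    have hnR : (0:ℝ) < (n:ℝ) := by exact_mod_cast Nat.lt_of_lt_of_le Nat.zero_lt_one hn
    field_simp
    ring
  have hC : Tendsto (fun n:ℕ =>
      (∫ y in (0:ℝ)..(n:ℝ), y ^ (a+1-1) * (1 - y/(n:ℝ)) ^ (θ₂ + (n:ℝ) - 1) * Real.exp (βt*y)) /
      (∫ y in (0:ℝ)..(n:ℝ), y ^ (a-1) * (1 - y/(n:ℝ)) ^ (θ₂ + (n:ℝ) - 1) * Real.exp (βt*y)))
      atTop (𝓝 (((1/(1-βt)) ^ (a+1) * Real.Gamma (a+1)) / ((1/(1-βt)) ^ a * Real.Gamma a))) :=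
    hGa1.div hGa hLpos.ne'
  have hφ := (hA.mul_const (1/((n₁:ℝ)+1))).mul hC
  have hval : 1 * (1/((n₁:ℝ)+1)) *
      (((1/(1-βt)) ^ (a+1) * Real.Gamma (a+1)) / ((1/(1-βt)) ^ a * Real.Gamma a))
      = a / ((1-βt) * ((n₁:ℝ)+1)) := by
    rw [Real.Gamma_add_one ha.ne', Real.rpow_add h1β, Real.rpow_one]
    have h1 : Real.Gamma a ≠ 0 := (Real.Gamma_pos_of_pos ha).ne'
    have h2 : (1/(1-βt)) ^ a ≠ 0 := (Real.rpow_pos_of_pos h1β a).ne'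
    have h4 : ((n₁:ℝ)+1) ≠ 0 := by positivity
    field_simp
  rw [hval] at hφ
  refine hφ.congr' ?_
  filter_upwards [eventually_ge_atTop 1] with n hn
  have hnpos : 0 < n := hn
  have hnR : (0:ℝ) < (n:ℝ) := by exact_mod_cast hnpos
  have hidx : n₁ + 1 + n = n₁ + n + 1 := by omega
  rw [hidx, hcast]
  rw [betaExp_scale (a := a+1) (b := θ₂ + (n:ℝ)) (c := βt) n hnpos,
    betaExp_scale (a := a) (b := θ₂ + (n:ℝ)) (c := βt) n hnpos]
  have hD : 0 < ∫ x in (0:ℝ)..1, x ^ (θ₁-1) * (1-x) ^ (θ₂-1) * Real.exp (βt*(n:ℝ)*x) :=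
    betaExp_pos hθ₁ hθ₂
  have hJ2 : 0 < ∫ x in (0:ℝ)..1,
      x ^ (a-1) * (1-x) ^ (θ₂+(n:ℝ)-1) * Real.exp (βt*(n:ℝ)*x) :=
    betaExp_pos ha (by positivity)
  rw [betaExp_scale (a := a) (b := θ₂ + (n:ℝ)) (c := βt) n hnpos] at hJ2
  have hp2 : (0:ℝ) < (n:ℝ) ^ (-a) := Real.rpow_pos_of_pos hnR _
  have hG2 : 0 < ∫ y in (0:ℝ)..(n:ℝ),
      y ^ (a-1) * (1 - y/(n:ℝ)) ^ (θ₂ + (n:ℝ) - 1) * Real.exp (βt*y) := by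
    nlinarith [hJ2, hp2]
  have hpow : (n:ℝ) ^ (-(a+1)) = (n:ℝ) ^ (-a) * ((n:ℝ))⁻¹ := by
    rw [← Real.rpow_neg_one (n:ℝ), ← Real.rpow_add hnR]
    congr 1; ring
  rw [hpow]
  have hC2 : (0:ℝ) < ((n₁+n).choose n₁ : ℝ) := by
    exact_mod_cast Nat.choose_pos (by omega)
  have hce := Nat.add_one_mul_choose_eq (n₁+n) n₁
  have hC1 : (((n₁+n+1).choose (n₁+1) : ℕ) : ℝ) * ((n₁:ℝ)+1)
      = ((n₁:ℝ)+1+(n:ℝ)) * ((n₁+n).choose n₁ : ℝ) := by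
    have h0 : ((n₁+n+1) * (n₁+n).choose n₁ : ℕ) = ((n₁+n+1).choose (n₁+1) * (n₁+1) : ℕ) := hce
    have h' := congrArg (fun k : ℕ => (k : ℝ)) h0
    push_cast at h' ⊢
    linarith [h']
  have h4 : ((n₁:ℝ)+1) ≠ 0 := by positivity
  set G1 := ∫ y in (0:ℝ)..(n:ℝ),
      y ^ (a+1-1) * (1 - y/(n:ℝ)) ^ (θ₂ + (n:ℝ) - 1) * Real.exp (βt*y) with hG1_def
  set G2 := ∫ y in (0:ℝ)..(n:ℝ),
      y ^ (a-1) * (1 - y/(n:ℝ)) ^ (θ₂ + (n:ℝ) - 1) * Real.exp (βt*y) with hG2_def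
  set D := ∫ x in (0:ℝ)..1, x ^ (θ₁-1) * (1-x) ^ (θ₂-1) * Real.exp (βt*(n:ℝ)*x) with hD_def
  set p := (n:ℝ) ^ (-a) with hp_def
  have hK1 : (((n₁+n+1).choose (n₁+1) : ℕ) : ℝ)
      = ((n₁:ℝ)+1+(n:ℝ)) * ((n₁+n).choose n₁ : ℝ) / ((n₁:ℝ)+1) := by
    rw [eq_div_iff h4]; exact hC1
  rw [hK1]
  have hDne : D ≠ 0 := hD.ne'
  have hG2ne : G2 ≠ 0 := hG2.ne'
  have hK2ne : ((n₁+n).choose n₁ : ℝ) ≠ 0 := hC2.ne'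
  have hrne : ((n:ℝ)) ≠ 0 := hnR.ne'
  have hpne : p ≠ 0 := hp2.ne'
  field_simp
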